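/- The rules of minimal logic hold in the modal base-extension semantics: for every binary relation 𝕽 on bases, every base B, all sets Γ, Δ of modal formulas and all modal formulas φ, ψ: (R) {φ} ⊩_{B,𝕽} φ; (S) if Γ ⊩_{B,𝕽} φ and Γ ⊆ Δ then Δ ⊩_{B,𝕽} φ; (C) if Γ ⊩_{B,𝕽} φ and Γ ∪ {φ} ⊩_{B,𝕽} ψ then Γ ⊩_{B,𝕽} ψ; (→E) {φ→ψ, φ} ⊩_{B,𝕽} ψ; (→I) if Γ ∪ {φ} ⊩_{B,𝕽} ψ then Γ ⊩_{B,𝕽} φ→ψ. -/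
import Mathlib


/-- A base rule: a pair of a finite set of premiss atoms and a conclusion atom. -/
structure BaseRule (At : Type) where
  prem : Finset At
  concl : At

/-- A base is a set of base rules. -/
abbrev Base (At : Type) := Set (BaseRule At)

/-- The closure of a base `B`: the least set of atoms closed under the rules of `B`. -/
inductive Closure {At : Type} (B : Base At) : At → Prop
  | step (r : BaseRule At) (hr : r ∈ B) (ih : ∀ q ∈ r.prem, Closure B q) :
      Closure B r.concl

/-- Modal formulas: atoms, falsum, implication and box. -/
inductive MForm (At : Type) where
  | atom : At → MForm At
  | bot  : MForm At
  | imp  : MForm At → MForm At → MForm At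
  | box  : MForm At → MForm At

/-- Base-extension validity of a modal formula at a base, given a relation on bases. -/
def MValid {At : Type} (R : Base At → Base At → Prop) : Base At → MForm At → Prop
  | B, .atom p  => Closure B p
  | B, .bot     => ∀ p : At, Closure B p
  | B, .imp φ ψ => ∀ C : Base At, B ⊆ C → MValid R C φ → MValid R C ψ
  | B, .box φ   => ∀ C C' : Base At, B ⊆ C → R C C' → MValid R C' φ

/-- Base-extension consequence: `Γ ⊩_{B,R} φ`. -/
def MCon {At : Type} (R : Base At → Base At → Prop) (Γ : Set (MForm At))
    (B : Base At) (φ : MForm At) : Prop :=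
  ∀ C : Base At, B ⊆ C → (∀ ψ ∈ Γ, MValid R C ψ) → MValid R C φ

/-- A base is inconsistent iff `⊥` is valid at it (a condition independent of `R`). -/
def Inconsistent {At : Type} (B : Base At) : Prop := ∀ p : At, Closure B p

/-- A base is consistent iff it is not inconsistent. -/
def Consistent {At : Type} (B : Base At) : Prop := ¬ Inconsistent B

/-- A base is maximally-consistent iff it is consistent and adding any missing
base rule makes it inconsistent. -/
def MaxCon {At : Type} (B : Base At) : Prop :=
  Consistent B ∧ ∀ δ : BaseRule At, δ ∈ B ∨ Inconsistent (insert δ B)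

/-- A modal relation on bases. -/
structure IsModalRel {At : Type} (R : Base At → Base At → Prop) : Prop where
  a : ∀ B : Base At, Inconsistent B →
        (∃ C : Base At, R B C ∧ Inconsistent C) ∧ ∀ C : Base At, R B C → Inconsistent C
  b : ∀ B : Base At, Consistent B → ∀ C : Base At, R B C → Consistent C
  c : ∀ B C : Base At, Consistent B → R B C →
        MaxCon B ∨ ∃ D : Base At, B ⊂ D ∧ R D C
  d : ∀ B C : Base At, R B C → ∀ D : Base At, D ⊆ B → R D C

/-- The four modal logics considered. -/
inductive Gamma where
  | K | KT | K4 | S4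

/-- Logics whose relations must be reflexive. -/
def Gamma.reflCond (γ : Gamma) : Prop := γ = Gamma.KT ∨ γ = Gamma.S4

/-- Logics whose relations must be transitive. -/
def Gamma.transCond (γ : Gamma) : Prop := γ = Gamma.K4 ∨ γ = Gamma.S4

/-- A `γ`-modal relation: a modal relation satisfying the frame conditions for `γ`. -/
def IsGammaRel {At : Type} (γ : Gamma) (R : Base At → Base At → Prop) : Prop :=
  IsModalRel R ∧ (γ.reflCond → Reflexive R) ∧ (γ.transCond → Transitive R)

/-- `γ`-validity in the base-extension semantics. -/
def GValid {At : Type} (γ : Gamma) (φ : MForm At) : Prop :=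
  ∀ (B : Base At) (R : Base At → Base At → Prop), IsGammaRel γ R → MValid R B φ

lemma myClosure_mono {At : Type} {B C : Base At} (h : B ⊆ C) {p : At}
    (hp : Closure B p) : Closure C p := by
  induction hp with
  | step r hr _ ih => exact Closure.step r (h hr) ih

lemma mvalid_mono {At : Type} (R : Base At → Base At → Prop) (B C : Base At)
    (hBC : B ⊆ C) : ∀ φ : MForm At, MValid R B φ → MValid R C φ := by
  intro φ
  induction φ generalizing B C with
  | atom p => intro h; exact myClosure_mono hBC h
  | bot => intro h p; exact myClosure_mono hBC (h p)
  | imp φ ψ ihφ ihψ => intro h D hCD; exact h D (hBC.trans hCD)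
  | box φ ih => intro h D D' hCD; exact h D D' (hBC.trans hCD)

/-- the rules of minimal logic hold in the modal base-extension semantics. -/
theorem modal_minimal_logic {At : Type} [Countable At] [Infinite At]
    (R : Base At → Base At → Prop) (B : Base At)
    (Γ Δ : Set (MForm At)) (φ ψ : MForm At) :
    (MCon R {φ} B φ) ∧
    (MCon R Γ B φ → Γ ⊆ Δ → MCon R Δ B φ) ∧
    (MCon R Γ B φ → MCon R (Γ ∪ {φ}) B ψ → MCon R Γ B ψ) ∧
    (MCon R {MForm.imp φ ψ, φ} B ψ) ∧
    (MCon R (Γ ∪ {φ}) B ψ → MCon R Γ B (MForm.imp φ ψ)) := by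
  refine ⟨?_, ?_, ?_, ?_, ?_⟩
  · intro C _ h; exact h φ rfl
  · intro h hsub C hBC hΔ
    exact h C hBC (fun ψ hψ => hΔ ψ (hsub hψ))
  · intro h1 h2 C hBC hΓ
    exact h2 C hBC (fun χ hχ => hχ.elim (fun h => hΓ χ h) (fun h => h ▸ h1 C hBC hΓ))
  · intro C hBC h
    have himp : MValid R C (MForm.imp φ ψ) := h _ (Or.inl rfl)
    exact himp C (subset_refl C) (h φ (Or.inr rfl))
  · intro h C hBC hΓ
    intro D hCD hφ
    exact h D (hBC.trans hCD) (fun χ hχ => hχ.elim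
      (fun hx => by
        -- need monotonicity of MValid
        exact mvalid_mono R C D hCD χ (hΓ χ hx)) (fun hx => hx ▸ hφ))
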